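/- Let n ≥ 1 be an integer, 0 < ε < 1, 0 < α < 1 and γ > 0 real parameters, and let ℓ : Fin n → ℝ satisfy 0 ≤ ℓ j ≤ −log ε for every j. Let n_S be an integer with 1 ≤ n_S ≤ n and n_S ≥ √n · √((−log(α/2)) · (log ε)² / (2 γ²)). Let S be a uniformly random n_S-element subset of Fin n (uniform distribution over all subsets of cardinality n_S) and define L = (1/n_S) Σ_{j ∈ S} ℓ j. Then P(|L − E[L]| ≥ γ) ≤ α. -/

import Mathlib

set_option maxHeartbeats 1000000

open scoped Classical

/-- Tangent-line (Bernoulli) inequality for powers. -/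
theorem bern_pow (k : ℕ) (a d : ℝ) (ha : 0 ≤ a) (had : 0 ≤ a + d) :
    a ^ k + k * a ^ (k - 1) * d ≤ (a + d) ^ k := by
  induction k with
  | zero => simp
  | succ k ih =>
    rcases k with _ | j
    · simp
    have hred : (j + 1 + 1 - 1) = j + 1 := rfl
    have hred2 : (j + 1 - 1) = j := rfl
    rw [hred]
    rw [hred2] at ih
    have hs : a ^ (j+1) = a * a ^ j := by rw [pow_succ']
    have hs2 : a ^ (j+1+1) = a * a ^ (j+1) := by rw [pow_succ']
    have hs3 : (a+d) ^ (j+1+1) = (a+d) * (a+d) ^ (j+1) := by rw [pow_succ']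
    by_cases hnn : 0 ≤ a ^ (j+1) + (j+1) * a ^ j * d
    · have h1 : (a + d) * (a ^ (j+1) + (j+1) * a ^ j * d) ≤ (a + d) ^ (j+1+1) := by
        rw [hs3]
        exact mul_le_mul_of_nonneg_left (by push_cast at ih ⊢; linarith) had
      refine le_trans ?_ h1
      have hdd : 0 ≤ ((j:ℝ)+1) * a ^ j * d ^ 2 := by positivity
      rw [hs2, hs]
      push_cast
      nlinarith [hdd]
    · push_neg at hnn
      have h3 : a * (a ^ (j+1) + (j+1) * a ^ j * d) ≤ 0 :=
        mul_nonpos_of_nonneg_of_nonpos ha hnn.le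
      have hd : d < 0 := by
        rcases le_or_gt 0 d with h | h
        · exfalso
          have : 0 ≤ a ^ (j+1) + (j+1) * a ^ j * d := by positivity
          linarith
        · exact h
      have h4 : a ^ (j+1) * d ≤ 0 := mul_nonpos_of_nonneg_of_nonpos (by positivity) hd.le
      have h5 : (0:ℝ) ≤ (a + d) ^ (j+1+1) := pow_nonneg had _
      rw [hs] at h3 h4
      rw [hs2, hs]
      push_cast
      nlinarith [h3, h4, h5]

/-- Maclaurin-type inequality: the average of products over `k`-subsets is at most
the `k`-th power of the average. -/
theorem maclaurin_aux {ι : Type*} [DecidableEq ι] (A : Finset ι) :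
    ∀ y : ι → ℝ, (∀ j ∈ A, 0 ≤ y j) → ∀ k : ℕ,
    ∑ S ∈ A.powersetCard k, ∏ j ∈ S, y j
      ≤ (A.card.choose k : ℝ) * ((∑ j ∈ A, y j) / A.card) ^ k := by
  induction A using Finset.cons_induction with
  | empty =>
    intro y hy k
    cases k with
    | zero => simp
    | succ k =>
      rw [Finset.powersetCard_eq_empty.mpr (by simp)]
      simp
  | cons a B ha ih =>
    intro y hy k
    cases k with
    | zero => simp
    | succ k =>
      have hyB : ∀ j ∈ B, 0 ≤ y j := fun j hj => hy j (Finset.mem_cons_of_mem hj)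
      have hya : 0 ≤ y a := hy a (Finset.mem_cons_self a B)
      -- split the powersetCard
      rw [Finset.cons_eq_insert, Finset.powersetCard_succ_insert ha]
      have hdisj : Disjoint (B.powersetCard (k+1))
          ((B.powersetCard k).image (insert a)) := by
        refine Finset.disjoint_left.mpr fun S hS hS' => ?_
        obtain ⟨T, hT, rfl⟩ := Finset.mem_image.mp hS'
        exact ha ((Finset.mem_powersetCard.mp hS).1 (Finset.mem_insert_self a T))
      rw [Finset.sum_union hdisj]
      have hinj : ∀ S ∈ B.powersetCard k, ∀ T ∈ B.powersetCard k,
          insert a S = insert a T → S = T := by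
        intro S hS T hT hST
        have hSa : a ∉ S := fun h => ha ((Finset.mem_powersetCard.mp hS).1 h)
        have hTa : a ∉ T := fun h => ha ((Finset.mem_powersetCard.mp hT).1 h)
        rw [← Finset.erase_insert hSa, ← Finset.erase_insert hTa, hST]
      rw [Finset.sum_image hinj]
      have himg : ∀ S ∈ B.powersetCard k, ∏ j ∈ insert a S, y j = y a * ∏ j ∈ S, y j := by
        intro S hS
        exact Finset.prod_insert fun h => ha ((Finset.mem_powersetCard.mp hS).1 h)
      rw [Finset.sum_congr rfl himg, ← Finset.mul_sum]
      -- notation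
      set m := B.card with hm
      set T := ∑ j ∈ B, y j with hT
      have hT0 : 0 ≤ T := Finset.sum_nonneg hyB
      set c := y a with hc
      have hcardA : (insert a B).card = m + 1 := Finset.card_insert_of_notMem ha
      have hsumA : ∑ j ∈ insert a B, y j = c + T := Finset.sum_insert ha
      rw [hcardA, hsumA]
      set aB : ℝ := T / m with haB
      have haB0 : 0 ≤ aB := div_nonneg hT0 (Nat.cast_nonneg m)
      have hmaB : (m : ℝ) * aB = T := by
        rcases Nat.eq_zero_or_pos m with h0 | hpos
        · have : B = ∅ := Finset.card_eq_zero.mp h0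
          simp [haB, hT, this, h0]
        · rw [haB]; field_simp [(Nat.cast_pos.mpr hpos : (0:ℝ) < m).ne']
      -- apply IH twice
      have ih1 := ih y hyB (k+1)
      have ih2 := ih y hyB k
      rw [← hT, ← haB] at ih1 ih2
      have step : ∑ S ∈ B.powersetCard (k+1), ∏ j ∈ S, y j
            + c * ∑ S ∈ B.powersetCard k, ∏ j ∈ S, y j
          ≤ (m.choose (k+1) : ℝ) * aB ^ (k+1) + c * ((m.choose k : ℝ) * aB ^ k) :=
        add_le_add ih1 (mul_le_mul_of_nonneg_left ih2 hya)
      refine le_trans step ?_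
      -- scalar step
      set n' := m + 1 with hn'
      have hn'R : (n' : ℝ) = (m : ℝ) + 1 := by push_cast [hn']; ring
      have hn'pos : (0:ℝ) < (n' : ℝ) := by positivity
      set μ : ℝ := (c + T) / n' with hμ
      have hμ0 : 0 ≤ μ := div_nonneg (add_nonneg hya hT0) (Nat.cast_nonneg n')
      rcases Nat.lt_or_ge n' (k+1) with hkn | hkn
      · have h1 : m.choose (k+1) = 0 := Nat.choose_eq_zero_of_lt (by omega)
        have h2 : m.choose k = 0 := Nat.choose_eq_zero_of_lt (by omega)
        have h3 : n'.choose (k+1) = 0 := Nat.choose_eq_zero_of_lt hkn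
        simp [h1, h2, h3]
      · set d : ℝ := (c - aB) / n' with hdd
        have hnd : (n' : ℝ) * d = c - aB := by
          rw [hdd]; field_simp
        have hd : μ = aB + d := by
          have h1 : (n':ℝ) * μ = c + T := by
            rw [hμ]; field_simp
          have h2 : (n':ℝ) * (aB + d) = c + T := by
            rw [mul_add, hnd, hn'R]; linear_combination hmaB
          exact mul_left_cancel₀ (ne_of_gt hn'pos) (by rw [h1, h2])
        have hpascal : n'.choose (k+1) = m.choose k + m.choose (k+1) := Nat.choose_succ_succ m k
        have hmulN : (m + 1) * m.choose k = n'.choose (k+1) * (k+1) := Nat.add_one_mul_choose_eq m k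
        have hcast2 : (n' : ℝ) * (m.choose k : ℝ) = (n'.choose (k+1) : ℝ) * ((k:ℝ)+1) := by
          rw [hn'R]; exact_mod_cast hmulN
        have hpascalR : (n'.choose (k+1) : ℝ) = (m.choose k : ℝ) + (m.choose (k+1) : ℝ) := by
          exact_mod_cast hpascal
        have hcast1 : (n' : ℝ) * (m.choose (k+1) : ℝ)
            = (n'.choose (k+1) : ℝ) * ((n' : ℝ) - ((k:ℝ)+1)) := by
          have : (n' : ℝ) * (m.choose (k+1) : ℝ)
              = (n' : ℝ) * (n'.choose (k+1) : ℝ) - (n' : ℝ) * (m.choose k : ℝ) := by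
            rw [hpascalR]; ring
          rw [this, hcast2]; ring
        have hbern := bern_pow (k+1) aB d haB0 (by rw [← hd]; exact hμ0)
        have hred : (k + 1 - 1) = k := rfl
        rw [hred] at hbern
        push_cast at hbern
        have hch : (0:ℝ) ≤ (n'.choose (k+1) : ℝ) := Nat.cast_nonneg _
        have hstep2 : (n'.choose (k+1) : ℝ) * (aB ^ (k+1) + ((k:ℝ)+1) * aB ^ k * d)
            ≤ (n'.choose (k+1) : ℝ) * μ ^ (k+1) := by
          rw [hd]
          exact mul_le_mul_of_nonneg_left hbern hch
        have heq : (n' : ℝ) * ((m.choose (k+1) : ℝ) * aB ^ (k+1) + c * ((m.choose k : ℝ) * aB ^ k))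
            = (n' : ℝ) * ((n'.choose (k+1) : ℝ) * (aB ^ (k+1) + ((k:ℝ)+1) * aB ^ k * d)) := by
          have expand : (n' : ℝ) * ((n'.choose (k+1) : ℝ) * (aB ^ (k+1) + ((k:ℝ)+1) * aB ^ k * d))
              = (n'.choose (k+1) : ℝ) * ((n' : ℝ) * aB ^ (k+1) + ((k:ℝ)+1) * aB ^ k * ((n':ℝ) * d)) := by
            ring
          rw [expand, hnd]
          linear_combination (aB ^ (k+1)) * hcast1 + (c * aB ^ k) * hcast2
        have := le_of_mul_le_mul_left (by
          calc (n' : ℝ) * ((m.choose (k+1) : ℝ) * aB ^ (k+1) + c * ((m.choose k : ℝ) * aB ^ k))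
              = (n' : ℝ) * ((n'.choose (k+1) : ℝ) * (aB ^ (k+1) + ((k:ℝ)+1) * aB ^ k * d)) := heq
            _ ≤ (n' : ℝ) * ((n'.choose (k+1) : ℝ) * μ ^ (k+1)) :=
                mul_le_mul_of_nonneg_left hstep2 hn'pos.le) hn'pos
        exact this

/-- Hoeffding's lemma, scalar version. -/
theorem hoeffding_scalar (p u : ℝ) (hp0 : 0 ≤ p) (hp1 : p ≤ 1) :
    (1 - p) + p * Real.exp u ≤ Real.exp (p * u + u ^ 2 / 8) := by
  set q := 1 - p with hq
  have hq0 : 0 ≤ q := by simp [hq]; linarith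
  have pos : ∀ v : ℝ, 0 < q + p * Real.exp v := by
    intro v
    rcases eq_or_lt_of_le hp0 with h | h
    · simp [← h, hq]
    · have := Real.exp_pos v
      nlinarith
  -- the function g and its derivative G
  set g : ℝ → ℝ := fun v => p * v + v ^ 2 / 8 - Real.log (q + p * Real.exp v) with hg
  set G : ℝ → ℝ := fun v => p + v / 4 - p * Real.exp v / (q + p * Real.exp v) with hG
  have hφ : ∀ v : ℝ, HasDerivAt (fun w => q + p * Real.exp w) (p * Real.exp v) v := by
    intro v
    simpa using ((Real.hasDerivAt_exp v).const_mul p).const_add q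
  have hgd : ∀ v : ℝ, HasDerivAt g (G v) v := by
    intro v
    have h1 : HasDerivAt (fun w : ℝ => p * w + w ^ 2 / 8) (p + 2 * v / 8) v := by
      have := ((hasDerivAt_id v).const_mul p).add
        (((hasDerivAt_pow 2 v)).div_const 8)
      simp at this; exact this
    have h2 : HasDerivAt (fun w => Real.log (q + p * Real.exp w))
        (p * Real.exp v / (q + p * Real.exp v)) v := (hφ v).log (ne_of_gt (pos v))
    have := h1.sub h2
    have e : G v = p + 2 * v / 8 - p * Real.exp v / (q + p * Real.exp v) := by
      show p + v / 4 - p * Real.exp v / (q + p * Real.exp v) = _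
      ring
    rw [e]
    exact this
  have hGd : ∀ v : ℝ, HasDerivAt G
      (1/4 - (p * Real.exp v * (q + p * Real.exp v) - p * Real.exp v * (p * Real.exp v))
        / (q + p * Real.exp v) ^ 2) v := by
    intro v
    have hnum : HasDerivAt (fun w => p * Real.exp w) (p * Real.exp v) v :=
      (Real.hasDerivAt_exp v).const_mul p
    have hdiv := hnum.div (hφ v) (ne_of_gt (pos v))
    have h1 : HasDerivAt (fun w : ℝ => p + w / 4) (1/4) v := by
      simpa using ((hasDerivAt_id v).div_const 4).const_add p
    exact h1.sub hdiv
  have hGnonneg : ∀ v : ℝ, 0 ≤ 1/4 - (p * Real.exp v * (q + p * Real.exp v)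
      - p * Real.exp v * (p * Real.exp v)) / (q + p * Real.exp v) ^ 2 := by
    intro v
    have hφv := pos v
    rw [sub_nonneg, div_le_iff₀ (by positivity)]
    nlinarith [sq_nonneg (q - p * Real.exp v), Real.exp_pos v]
  have hGmono : Monotone G :=
    monotone_of_deriv_nonneg (fun v => (hGd v).differentiableAt)
      (fun v => by rw [(hGd v).deriv]; exact hGnonneg v)
  have hG0 : G 0 = 0 := by
    simp [hG, hq]
  have hderiv : ∀ v : ℝ, deriv g v = G v := fun v => (hgd v).deriv
  have hgdiff : Differentiable ℝ g := fun v => (hgd v).differentiableAt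
  have hkey : ∀ v : ℝ, g 0 ≤ g v := by
    intro v
    rcases le_total 0 v with h | h
    · have hmono : MonotoneOn g (Set.Ici 0) := by
        apply monotoneOn_of_deriv_nonneg (convex_Ici 0) hgdiff.continuous.continuousOn
          hgdiff.differentiableOn
        intro x hx
        rw [hderiv]
        rw [interior_Ici] at hx
        rw [← hG0]
        exact hGmono (le_of_lt hx)
      exact hmono Set.self_mem_Ici h h
    · have hanti : AntitoneOn g (Set.Iic 0) := by
        apply antitoneOn_of_deriv_nonpos (convex_Iic 0) hgdiff.continuous.continuousOn
          hgdiff.differentiableOn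
        intro x hx
        rw [hderiv]
        rw [interior_Iic] at hx
        rw [← hG0]
        exact hGmono (le_of_lt hx)
      exact hanti h Set.self_mem_Iic h
  have hg0 : g 0 = 0 := by
    simp [hg, hq]
  have := hkey u
  rw [hg0] at this
  have hlog : Real.log (q + p * Real.exp u) ≤ p * u + u ^ 2 / 8 := by
    simp only [hg] at this
    linarith
  calc (1 - p) + p * Real.exp u = q + p * Real.exp u := by rw [hq]
    _ = Real.exp (Real.log (q + p * Real.exp u)) := (Real.exp_log (pos u)).symm
    _ ≤ Real.exp (p * u + u ^ 2 / 8) := Real.exp_le_exp.mpr hlog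

/-- Averaged Hoeffding mgf bound for finite uniform distribution. -/
theorem hoeffding_avg (n : ℕ) (hn : 1 ≤ n) (b : ℝ) (hb : 0 < b) (s : ℝ)
    (ℓ : Fin n → ℝ) (hl : ∀ j, 0 ≤ ℓ j ∧ ℓ j ≤ b) :
    ∑ j, Real.exp (s * ℓ j)
      ≤ (n : ℝ) * Real.exp (s * ((∑ j, ℓ j) / n) + s ^ 2 * b ^ 2 / 8) := by
  have hnpos : (0:ℝ) < n := by exact_mod_cast hn
  set μ : ℝ := (∑ j, ℓ j) / n with hμ
  have hμ0 : 0 ≤ μ := div_nonneg (Finset.sum_nonneg fun j _ => (hl j).1) hnpos.le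
  have hμb : μ ≤ b := by
    rw [hμ, div_le_iff₀ hnpos]
    calc ∑ j, ℓ j ≤ ∑ _j : Fin n, b := Finset.sum_le_sum fun j _ => (hl j).2
      _ = b * (n : ℝ) := by
        rw [Finset.sum_const, Finset.card_univ, Fintype.card_fin, nsmul_eq_mul, mul_comm]
  set p : ℝ := μ / b with hp
  have hp0 : 0 ≤ p := div_nonneg hμ0 hb.le
  have hp1 : p ≤ 1 := by rw [hp, div_le_one hb]; exact hμb
  -- pointwise convexity bound
  have hpoint : ∀ j, Real.exp (s * ℓ j)
      ≤ (1 - ℓ j / b) + (ℓ j / b) * Real.exp (s * b) := by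
    intro j
    set t : ℝ := ℓ j / b with ht
    have ht0 : 0 ≤ t := div_nonneg (hl j).1 hb.le
    have ht1 : t ≤ 1 := by rw [ht, div_le_one hb]; exact (hl j).2
    have hcomb := convexOn_exp.2 (Set.mem_univ (0:ℝ)) (Set.mem_univ (s * b))
      (by linarith : (0:ℝ) ≤ 1 - t) ht0 (by ring)
    have harg : (1 - t) • (0:ℝ) + t • (s * b) = s * ℓ j := by
      have : t * b = ℓ j := by rw [ht]; field_simp
      simp only [smul_eq_mul]
      linear_combination s * this
    rw [harg] at hcomb
    simpa [Real.exp_zero, smul_eq_mul, mul_comm] using hcomb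
  calc ∑ j, Real.exp (s * ℓ j)
      ≤ ∑ j, ((1 - ℓ j / b) + (ℓ j / b) * Real.exp (s * b)) :=
        Finset.sum_le_sum fun j _ => hpoint j
    _ = (n : ℝ) * ((1 - p) + p * Real.exp (s * b)) := by
        rw [Finset.sum_add_distrib]
        have h1 : ∑ j : Fin n, (1 - ℓ j / b) = (n : ℝ) - (∑ j, ℓ j) / b := by
          rw [Finset.sum_sub_distrib]
          simp [← Finset.sum_div]
        have h2 : ∑ j : Fin n, (ℓ j / b) * Real.exp (s * b)
            = ((∑ j, ℓ j) / b) * Real.exp (s * b) := by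
          rw [← Finset.sum_mul, ← Finset.sum_div]
        rw [h1, h2]
        have hSp : (∑ j, ℓ j) = n * μ := by
          rw [hμ]; field_simp
        rw [hSp, hp, hμ, hSp]
        field_simp
    _ ≤ (n : ℝ) * Real.exp (p * (s * b) + (s * b) ^ 2 / 8) := by
        apply mul_le_mul_of_nonneg_left (hoeffding_scalar p (s * b) hp0 hp1) hnpos.le
    _ = (n : ℝ) * Real.exp (s * μ + s ^ 2 * b ^ 2 / 8) := by
        congr 2
        rw [hp]
        field_simp

/-- Double counting: each element appears in `choose (n-1) (k-1)` many `k`-subsets. -/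
theorem sum_powersetCard_sum {ι : Type*} [DecidableEq ι] (A : Finset ι) (f : ι → ℝ)
    (k : ℕ) (hk : 1 ≤ k) :
    ∑ S ∈ A.powersetCard k, ∑ j ∈ S, f j
      = ((A.card - 1).choose (k - 1) : ℝ) * ∑ j ∈ A, f j := by
  have h1 : ∀ S ∈ A.powersetCard k, ∑ j ∈ S, f j
      = ∑ j ∈ A, if j ∈ S then f j else 0 := by
    intro S hS
    rw [Finset.sum_ite_mem]
    congr 1
    exact (Finset.inter_eq_right.mpr (Finset.mem_powersetCard.mp hS).1).symm
  rw [Finset.sum_congr rfl h1, Finset.sum_comm]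
  have h2 : ∀ j ∈ A, ∑ S ∈ A.powersetCard k, (if j ∈ S then f j else 0)
      = ((A.card - 1).choose (k - 1) : ℝ) * f j := by
    intro j hj
    rw [← Finset.sum_filter]
    rw [Finset.sum_const]
    have hcard : ((A.powersetCard k).filter fun S => j ∈ S).card
        = (A.card - 1).choose (k - 1) := by
      rw [← Finset.card_erase_of_mem hj, ← Finset.card_powersetCard (k-1) (A.erase j)]
      refine Finset.card_bij' (fun S _ => S.erase j) (fun T _ => insert j T) ?hi ?hj ?li ?ri
      case hi =>
        intro S hS
        obtain ⟨hSk, hjS⟩ := Finset.mem_filter.mp hS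
        obtain ⟨hSA, hScard⟩ := Finset.mem_powersetCard.mp hSk
        refine Finset.mem_powersetCard.mpr ⟨?_, ?_⟩
        · exact Finset.erase_subset_erase j hSA
        · rw [Finset.card_erase_of_mem hjS, hScard]
      case hj =>
        intro T hT
        obtain ⟨hTA, hTcard⟩ := Finset.mem_powersetCard.mp hT
        have hjT : j ∉ T := fun h => (Finset.notMem_erase j A) (hTA h)
        refine Finset.mem_filter.mpr ⟨Finset.mem_powersetCard.mpr ⟨?_, ?_⟩, Finset.mem_insert_self j T⟩
        · intro x hx
          rcases Finset.mem_insert.mp hx with rfl | hx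
          · exact hj
          · exact (Finset.erase_subset j A) (hTA hx)
        · rw [Finset.card_insert_of_notMem hjT, hTcard]
          omega
      case li =>
        intro S hS
        exact Finset.insert_erase (Finset.mem_filter.mp hS).2
      case ri =>
        intro T hT
        obtain ⟨hTA, _⟩ := Finset.mem_powersetCard.mp hT
        have hjT : j ∉ T := fun h => (Finset.notMem_erase j A) (hTA h)
        exact Finset.erase_insert hjT
    rw [hcard, nsmul_eq_mul]
  rw [Finset.sum_congr rfl h2, ← Finset.mul_sum]

/-- One-sided Hoeffding tail bound for sampling without replacement. -/
theorem one_sided_tail (n k : ℕ) (hk1 : 1 ≤ k) (hkn : k ≤ n) (b γ : ℝ) (hb : 0 < b)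
    (hγ : 0 < γ) (ℓ : Fin n → ℝ) (hl : ∀ j, 0 ≤ ℓ j ∧ ℓ j ≤ b) :
    (((Finset.powersetCard k (Finset.univ : Finset (Fin n))).filter
        fun s => (k : ℝ) * ((∑ j, ℓ j) / n + γ) ≤ ∑ j ∈ s, ℓ j).card : ℝ)
      ≤ ((Finset.powersetCard k (Finset.univ : Finset (Fin n))).card : ℝ)
          * Real.exp (-(2 * (k : ℝ) * γ ^ 2 / b ^ 2)) := by
  have hn : 1 ≤ n := le_trans hk1 hkn
  have hnpos : (0:ℝ) < n := by exact_mod_cast hn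
  set 𝒮 := Finset.powersetCard k (Finset.univ : Finset (Fin n)) with h𝒮
  set μ : ℝ := (∑ j, ℓ j) / n with hμ
  set t : ℝ := 4 * γ / b ^ 2 with htd
  have ht : 0 < t := by positivity
  set F := 𝒮.filter fun s => (k : ℝ) * (μ + γ) ≤ ∑ j ∈ s, ℓ j with hF
  -- step A: count ≤ sum of exponentials
  have stepA : (F.card : ℝ) ≤ ∑ s ∈ F, Real.exp (t * (∑ j ∈ s, ℓ j - (k:ℝ) * (μ + γ))) := by
    rw [Finset.card_eq_sum_ones]
    push_cast
    apply Finset.sum_le_sum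
    intro s hs
    apply Real.one_le_exp
    have := (Finset.mem_filter.mp hs).2
    have h0 : 0 ≤ ∑ j ∈ s, ℓ j - (k:ℝ) * (μ + γ) := by linarith
    positivity
  have stepB : ∑ s ∈ F, Real.exp (t * (∑ j ∈ s, ℓ j - (k:ℝ) * (μ + γ)))
      ≤ ∑ s ∈ 𝒮, Real.exp (t * (∑ j ∈ s, ℓ j - (k:ℝ) * (μ + γ))) :=
    Finset.sum_le_sum_of_subset_of_nonneg (Finset.filter_subset _ _)
      (fun s _ _ => (Real.exp_pos _).le)
  have stepC : ∀ s ∈ 𝒮, Real.exp (t * (∑ j ∈ s, ℓ j - (k:ℝ) * (μ + γ)))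
      = Real.exp (-(t * (k:ℝ) * (μ + γ))) * ∏ j ∈ s, Real.exp (t * ℓ j) := by
    intro s _
    rw [← Real.exp_sum, ← Real.exp_add]
    congr 1
    rw [← Finset.mul_sum]
    ring
  have card𝒮 : 𝒮.card = n.choose k := by
    rw [h𝒮, Finset.card_powersetCard, Finset.card_univ, Fintype.card_fin]
  -- step D: Maclaurin
  have stepD : ∑ s ∈ 𝒮, ∏ j ∈ s, Real.exp (t * ℓ j)
      ≤ (n.choose k : ℝ) * ((∑ j, Real.exp (t * ℓ j)) / n) ^ k := by
    have := maclaurin_aux (Finset.univ : Finset (Fin n)) (fun j => Real.exp (t * ℓ j))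
      (fun j _ => (Real.exp_pos _).le) k
    rwa [Finset.card_univ, Fintype.card_fin] at this
  -- step E
  have havg := hoeffding_avg n hn b hb t ℓ hl
  have hbase0 : (0:ℝ) ≤ (∑ j, Real.exp (t * ℓ j)) / n :=
    div_nonneg (Finset.sum_nonneg fun j _ => (Real.exp_pos _).le) hnpos.le
  have stepE : ((∑ j, Real.exp (t * ℓ j)) / n) ^ k
      ≤ Real.exp (t * μ + t ^ 2 * b ^ 2 / 8) ^ k := by
    apply pow_le_pow_left₀ hbase0
    rw [div_le_iff₀ hnpos]
    calc ∑ j, Real.exp (t * ℓ j) ≤ (n:ℝ) * Real.exp (t * μ + t ^ 2 * b ^ 2 / 8) := havg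
      _ = Real.exp (t * μ + t ^ 2 * b ^ 2 / 8) * n := by ring
  -- combine
  calc (F.card : ℝ)
      ≤ ∑ s ∈ F, Real.exp (t * (∑ j ∈ s, ℓ j - (k:ℝ) * (μ + γ))) := stepA
    _ ≤ ∑ s ∈ 𝒮, Real.exp (t * (∑ j ∈ s, ℓ j - (k:ℝ) * (μ + γ))) := stepB
    _ = Real.exp (-(t * (k:ℝ) * (μ + γ))) * ∑ s ∈ 𝒮, ∏ j ∈ s, Real.exp (t * ℓ j) := by
        rw [Finset.sum_congr rfl stepC, ← Finset.mul_sum]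
    _ ≤ Real.exp (-(t * (k:ℝ) * (μ + γ)))
          * ((n.choose k : ℝ) * Real.exp (t * μ + t ^ 2 * b ^ 2 / 8) ^ k) := by
        apply mul_le_mul_of_nonneg_left _ (Real.exp_pos _).le
        exact le_trans stepD (mul_le_mul_of_nonneg_left stepE (Nat.cast_nonneg _))
    _ = (n.choose k : ℝ) * (Real.exp (-(t * (k:ℝ) * (μ + γ)))
          * Real.exp ((k:ℝ) * (t * μ + t ^ 2 * b ^ 2 / 8))) := by
        rw [← Real.exp_nat_mul]
        ring
    _ = (n.choose k : ℝ) * Real.exp ((k:ℝ) * (t ^ 2 * b ^ 2 / 8 - t * γ)) := by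
        rw [← Real.exp_add]
        congr 1
        ring
    _ = ((𝒮.card : ℕ) : ℝ) * Real.exp (-(2 * (k : ℝ) * γ ^ 2 / b ^ 2)) := by
        rw [card𝒮]
        congr 1
        rw [htd]
        field_simp
        ring

theorem fastgae_threshold_guarantees_confidence
    (n : ℕ) (hn : 1 ≤ n)
    (ε : ℝ) (hε0 : 0 < ε) (hε1 : ε < 1)
    (α : ℝ) (hα0 : 0 < α) (hα1 : α < 1)
    (γ : ℝ) (hγ : 0 < γ)
    (ℓ : Fin n → ℝ) (hℓ : ∀ j, 0 ≤ ℓ j ∧ ℓ j ≤ -Real.log ε)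
    (nS : ℕ) (h1 : 1 ≤ nS) (h2 : nS ≤ n)
    (hthr : (nS : ℝ) ≥ Real.sqrt (n : ℝ) *
        Real.sqrt ((-Real.log (α / 2)) * (Real.log ε) ^ 2 / (2 * γ ^ 2))) :
    let 𝒮 := Finset.powersetCard nS (Finset.univ : Finset (Fin n))
    let Lv : Finset (Fin n) → ℝ := fun s => (1 / (nS : ℝ)) * ∑ j ∈ s, ℓ j
    let EL : ℝ := (∑ s ∈ 𝒮, Lv s) / (𝒮.card : ℝ)
    ((𝒮.filter fun s => γ ≤ |Lv s - EL|).card : ℝ) / (𝒮.card : ℝ) ≤ α := by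
  intro 𝒮 Lv EL
  set b : ℝ := -Real.log ε with hbdef
  have hb : 0 < b := by
    rw [hbdef]
    have := Real.log_neg hε0 hε1
    linarith
  have hnpos : (0:ℝ) < n := by exact_mod_cast hn
  have hnSpos : (0:ℝ) < nS := by exact_mod_cast h1
  set μ : ℝ := (∑ j, ℓ j) / n with hμdef
  -- cardinality of 𝒮
  have card𝒮 : 𝒮.card = n.choose nS := by
    show (Finset.powersetCard nS (Finset.univ : Finset (Fin n))).card = n.choose nS
    rw [Finset.card_powersetCard, Finset.card_univ, Fintype.card_fin]
  have hchoosepos : 0 < n.choose nS := Nat.choose_pos h2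
  have hcard𝒮pos : (0:ℝ) < (𝒮.card : ℝ) := by
    rw [card𝒮]; exact_mod_cast hchoosepos
  -- EL = μ
  have hEL : EL = μ := by
    show (∑ s ∈ 𝒮, (1 / (nS : ℝ)) * ∑ j ∈ s, ℓ j) / (𝒮.card : ℝ) = μ
    rw [← Finset.mul_sum]
    have hsum : ∑ s ∈ 𝒮, ∑ j ∈ s, ℓ j = ((n - 1).choose (nS - 1) : ℝ) * ∑ j, ℓ j := by
      have := sum_powersetCard_sum (Finset.univ : Finset (Fin n)) ℓ nS h1
      rwa [Finset.card_univ, Fintype.card_fin] at this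
    rw [hsum, card𝒮, hμdef]
    have hid : n * ((n - 1).choose (nS - 1)) = n.choose nS * nS := by
      have := Nat.add_one_mul_choose_eq (n - 1) (nS - 1)
      have e1 : n - 1 + 1 = n := by omega
      have e2 : nS - 1 + 1 = nS := by omega
      rw [e1, e2] at this
      exact this
    have hidR : (n : ℝ) * ((n - 1).choose (nS - 1) : ℝ) = (n.choose nS : ℝ) * (nS : ℝ) := by
      exact_mod_cast hid
    have hcnk : ((n.choose nS : ℕ) : ℝ) ≠ 0 := Nat.cast_ne_zero.mpr hchoosepos.ne'
    field_simp
    nlinarith [hidR, Finset.sum_nonneg (fun j (_ : j ∈ Finset.univ) => (hℓ j).1)]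
  -- the two one-sided events
  set ℓ' : Fin n → ℝ := fun j => b - ℓ j with hℓ'def
  have hl' : ∀ j, 0 ≤ ℓ' j ∧ ℓ' j ≤ b := fun j => ⟨by simp [hℓ'def]; linarith [(hℓ j).2],
    by simp [hℓ'def]; linarith [(hℓ j).1]⟩
  set F := 𝒮.filter fun s => γ ≤ |Lv s - EL| with hF
  set F₁ := 𝒮.filter (fun s => (nS : ℝ) * ((∑ j, ℓ j) / n + γ) ≤ ∑ j ∈ s, ℓ j) with hF₁
  set F₂ := 𝒮.filter (fun s => (nS : ℝ) * ((∑ j, ℓ' j) / n + γ) ≤ ∑ j ∈ s, ℓ' j) with hF₂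
  have hμ' : (∑ j, ℓ' j) = (n : ℝ) * b - ∑ j, ℓ j := by
    rw [hℓ'def]
    rw [Finset.sum_sub_distrib, Finset.sum_const, Finset.card_univ, Fintype.card_fin,
      nsmul_eq_mul]
  have hsubset : F ⊆ F₁ ∪ F₂ := by
    intro s hs
    obtain ⟨hs𝒮, habs⟩ := Finset.mem_filter.mp hs
    have hscard : (s.card : ℝ) = (nS : ℝ) := by
      exact_mod_cast congrArg Nat.cast (Finset.mem_powersetCard.mp hs𝒮).2
    have hLv : Lv s = (1 / (nS : ℝ)) * ∑ j ∈ s, ℓ j := rfl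
    rw [hEL] at habs
    rcases le_abs.mp habs with hcase | hcase
    · apply Finset.mem_union_left
      refine Finset.mem_filter.mpr ⟨hs𝒮, ?_⟩
      rw [hLv] at hcase
      rw [hμdef] at hcase
      have : (nS:ℝ) * γ ≤ ∑ j ∈ s, ℓ j - (nS:ℝ) * ((∑ j, ℓ j) / n) := by
        have := mul_le_mul_of_nonneg_left hcase hnSpos.le
        calc (nS:ℝ) * γ ≤ (nS:ℝ) * ((1 / (nS : ℝ)) * ∑ j ∈ s, ℓ j - (∑ j, ℓ j) / n) := this
          _ = ∑ j ∈ s, ℓ j - (nS:ℝ) * ((∑ j, ℓ j) / n) := by field_simp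
      linarith [this]
    · apply Finset.mem_union_right
      refine Finset.mem_filter.mpr ⟨hs𝒮, ?_⟩
      -- ∑_{j∈s} ℓ' j = nS * b - ∑_{j∈s} ℓ j
      have hsum' : ∑ j ∈ s, ℓ' j = (nS : ℝ) * b - ∑ j ∈ s, ℓ j := by
        rw [hℓ'def, Finset.sum_sub_distrib, Finset.sum_const, nsmul_eq_mul, hscard]
      rw [hsum', hμ']
      rw [hLv, hμdef] at hcase
      have h3 : (nS:ℝ) * γ ≤ (nS:ℝ) * ((∑ j, ℓ j) / n) - ∑ j ∈ s, ℓ j := by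
        have := mul_le_mul_of_nonneg_left hcase hnSpos.le
        calc (nS:ℝ) * γ ≤ (nS:ℝ) * (-((1 / (nS : ℝ)) * ∑ j ∈ s, ℓ j - (∑ j, ℓ j) / n)) := this
          _ = (nS:ℝ) * ((∑ j, ℓ j) / n) - ∑ j ∈ s, ℓ j := by field_simp; ring
      have hexp : (nS : ℝ) * (((n : ℝ) * b - ∑ j, ℓ j) / n + γ)
          = (nS:ℝ) * b - (nS:ℝ) * ((∑ j, ℓ j) / n) + (nS:ℝ) * γ := by
        field_simp
      rw [hexp]
      linarith [h3]
  -- tail bounds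
  have htail₁ := one_sided_tail n nS h1 h2 b γ hb hγ ℓ hℓ
  have htail₂ := one_sided_tail n nS h1 h2 b γ hb hγ ℓ' hl'
  -- numeric: exp(-(2 nS γ²/b²)) ≤ α/2
  have hhalf : Real.exp (-(2 * (nS : ℝ) * γ ^ 2 / b ^ 2)) ≤ α / 2 := by
    have hα2 : (0:ℝ) < α / 2 := by linarith
    have hα2lt : α / 2 < 1 := by linarith
    have hlogneg : Real.log (α / 2) < 0 := Real.log_neg hα2 hα2lt
    set D : ℝ := (-Real.log (α / 2)) * (Real.log ε) ^ 2 / (2 * γ ^ 2) with hD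
    have hD0 : 0 ≤ D := by
      rw [hD]
      have : 0 ≤ -Real.log (α / 2) := by linarith
      positivity
    have hsq : (n : ℝ) * D ≤ (nS : ℝ) ^ 2 := by
      have hrhs0 : 0 ≤ Real.sqrt (n : ℝ) * Real.sqrt D := by positivity
      have := mul_self_le_mul_self hrhs0 hthr
      calc (n : ℝ) * D = (Real.sqrt (n:ℝ) * Real.sqrt D) * (Real.sqrt (n:ℝ) * Real.sqrt D) := by
            rw [mul_mul_mul_comm, Real.mul_self_sqrt hnpos.le, Real.mul_self_sqrt hD0]
        _ ≤ (nS : ℝ) * (nS : ℝ) := this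
        _ = (nS : ℝ) ^ 2 := by ring
    have hDnS : D ≤ (nS : ℝ) := by
      have hnSn : (nS : ℝ) ≤ (n : ℝ) := by exact_mod_cast h2
      nlinarith
    have hlogsq : (Real.log ε) ^ 2 = b ^ 2 := by rw [hbdef]; ring
    have hexp : -Real.log (α/2) ≤ 2 * (nS : ℝ) * γ ^ 2 / b ^ 2 := by
      have hb2 : (0:ℝ) < b ^ 2 := by positivity
      have h2γ : (0:ℝ) < 2 * γ ^ 2 := by positivity
      rw [hD, hlogsq] at hDnS
      rw [div_le_iff₀ h2γ] at hDnS
      rw [le_div_iff₀ hb2]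
      nlinarith [hDnS]
    calc Real.exp (-(2 * (nS : ℝ) * γ ^ 2 / b ^ 2)) ≤ Real.exp (Real.log (α/2)) := by
          apply Real.exp_le_exp.mpr
          linarith
      _ = α / 2 := Real.exp_log hα2
  -- put everything together
  have hcount : (F.card : ℝ) ≤ (𝒮.card : ℝ) * α := by
    have hsub : (F.card : ℝ) ≤ (F₁.card : ℝ) + (F₂.card : ℝ) := by
      have := Finset.card_le_card hsubset
      have := le_trans this (Finset.card_union_le F₁ F₂)
      exact_mod_cast this
    have hb₁ : (F₁.card : ℝ) ≤ (𝒮.card : ℝ) * (α / 2) := by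
      refine le_trans htail₁ ?_
      exact mul_le_mul_of_nonneg_left hhalf (Nat.cast_nonneg _)
    have hb₂ : (F₂.card : ℝ) ≤ (𝒮.card : ℝ) * (α / 2) := by
      refine le_trans htail₂ ?_
      exact mul_le_mul_of_nonneg_left hhalf (Nat.cast_nonneg _)
    linarith
  rw [div_le_iff₀ hcard𝒮pos]
  calc (F.card : ℝ) ≤ (𝒮.card : ℝ) * α := hcount
    _ = α * (𝒮.card : ℝ) := by ring
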